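/- arXiv:2103.05887 — 3 statements merged into one kernel-verified Lean document; each statement's English description precedes it below -/
import Mathlib

section
/- For every p > 1, ω > 0, and q ≥ 1, the identity ∫_ℝ R_ω(x)^q ∂_ω R_ω(x) dx = (2q - p + 3)/(2(p-1)(q+1)) · ω^{-1} ∫_ℝ R_ω(x)^{q+1} dx holds. -/
open Real MeasureTheory Set

/-- The line soliton `R_ω(x) = ω^{1/(p-1)} ((p+1)/2)^{1/(p-1)} sech^{2/(p-1)}((p-1)/2 √ω x)`. -/
noncomputable def soliton (p ω x : ℝ) : ℝ :=
  ω ^ (1 / (p - 1)) * ((p + 1) / 2) ^ (1 / (p - 1)) *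
    (1 / Real.cosh ((p - 1) / 2 * Real.sqrt ω * x)) ^ (2 / (p - 1))

lemma abs_sinh_le_cosh' (x : ℝ) : |Real.sinh x| ≤ Real.cosh x := by
  rw [Real.sinh_eq, Real.cosh_eq, abs_div, abs_two]
  gcongr
  exact (abs_sub _ _).trans (by
    rw [abs_of_pos (Real.exp_pos _), abs_of_pos (Real.exp_pos _)])

lemma soliton_pos {p ω : ℝ} (hp : 1 < p) (hω : 0 < ω) (x : ℝ) : 0 < soliton p ω x := by
  unfold soliton
  have h1 : (0:ℝ) < (p+1)/2 := by linarith
  have h2 : (0:ℝ) < Real.cosh ((p - 1) / 2 * Real.sqrt ω * x) := Real.cosh_pos _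
  positivity

lemma integrable_aux {b : ℝ} (hb : 0 < b) (n : ℕ) :
    Integrable (fun x : ℝ => |x| ^ n * Real.exp (-b * |x|)) := by
  have hIoi : IntegrableOn (fun x : ℝ => |x| ^ n * Real.exp (-b * |x|)) (Ioi 0) := by
    have h := integrableOn_rpow_mul_exp_neg_mul_rpow (p := 1) (s := (n : ℝ))
      (by exact_mod_cast neg_one_lt_zero.trans_le (Nat.cast_nonneg n)) one_pos hb
    refine h.congr_fun (fun x hx => ?_) measurableSet_Ioi
    have hx0 : (0:ℝ) < x := hx
    dsimp only
    rw [Real.rpow_one, Real.rpow_natCast, abs_of_pos hx0]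
  have hIic : IntegrableOn (fun x : ℝ => |x| ^ n * Real.exp (-b * |x|)) (Iic 0) := by
    rw [← Measure.map_neg_eq_self (volume : Measure ℝ)]
    have m : MeasurableEmbedding (fun x : ℝ => -x) := (Homeomorph.neg ℝ).measurableEmbedding
    rw [m.integrableOn_map_iff]
    simp_rw [Function.comp_def, abs_neg, neg_preimage, neg_Iic, neg_zero]
    exact (integrableOn_Ici_iff_integrableOn_Ioi).mpr hIoi
  have h := hIic.union hIoi
  rw [Iic_union_Ioi] at h
  exact integrableOn_univ.mp h

lemma soliton_hasDerivAt_x {p ω : ℝ} (hp : 1 < p) (hω : 0 < ω) (x : ℝ) :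
    HasDerivAt (fun x => soliton p ω x)
      (-(Real.sqrt ω * (Real.sinh ((p - 1) / 2 * Real.sqrt ω * x) /
          Real.cosh ((p - 1) / 2 * Real.sqrt ω * x))) * soliton p ω x) x := by
  set c := (p - 1) / 2 * Real.sqrt ω with hc
  have hsω : 0 < Real.sqrt ω := Real.sqrt_pos.mpr hω
  have hp2 : (0:ℝ) < (p-1)/2 := by linarith
  have hc0 : 0 < c := by positivity
  have h1 : HasDerivAt (fun x : ℝ => c * x) c x := by
    simpa using (hasDerivAt_id x).const_mul c
  have h2 : HasDerivAt (fun x : ℝ => Real.cosh (c * x)) (Real.sinh (c * x) * c) x :=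
    (Real.hasDerivAt_cosh (c * x)).comp x h1
  have h3 : HasDerivAt (fun x : ℝ => (Real.cosh (c * x))⁻¹)
      (-(Real.sinh (c * x) * c) / Real.cosh (c * x) ^ 2) x :=
    h2.inv (Real.cosh_pos _).ne'
  have h4 : HasDerivAt (fun x : ℝ => (Real.cosh (c * x))⁻¹ ^ (2 / (p - 1)))
      (-(Real.sinh (c * x) * c) / Real.cosh (c * x) ^ 2 * (2 / (p - 1)) *
        ((Real.cosh (c * x))⁻¹) ^ (2 / (p - 1) - 1)) x :=
    h3.rpow_const (Or.inl (by positivity))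
  have h5 := h4.const_mul (ω ^ (1 / (p - 1)) * ((p + 1) / 2) ^ (1 / (p - 1)))
  have key : ∀ y : ℝ, soliton p ω y =
      ω ^ (1 / (p - 1)) * ((p + 1) / 2) ^ (1 / (p - 1)) * ((Real.cosh (c * y))⁻¹ ^ (2 / (p - 1))) := by
    intro y; unfold soliton; rw [hc]; norm_num
  rw [show (fun x => soliton p ω x) = fun x : ℝ =>
      ω ^ (1 / (p - 1)) * ((p + 1) / 2) ^ (1 / (p - 1)) * ((Real.cosh (c * x))⁻¹ ^ (2 / (p - 1)))
    from funext key]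
  convert h5 using 1
  · rfl
  · rfl
  have hp1 : p - 1 ≠ 0 := by linarith
  have hch : (0:ℝ) < Real.cosh (c * x) := Real.cosh_pos _
  have hrw : ((Real.cosh (c*x))⁻¹) ^ (2 / (p - 1) - 1) * (Real.cosh (c*x))⁻¹
      = ((Real.cosh (c*x))⁻¹) ^ (2 / (p - 1)) := by
    rw [← Real.rpow_add_one (by positivity) (2 / (p - 1) - 1)]
    ring_nf
  have hcs : c * (2 / (p-1)) = Real.sqrt ω := by
    rw [hc]; field_simp
  rw [key x, ← hcs, ← hrw]
  field_simp

lemma soliton_hasDerivAt_omega {p ω : ℝ} (hp : 1 < p) (hω : 0 < ω) (x : ℝ) :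
    HasDerivAt (fun w => soliton p w x)
      ((1 / ((p - 1) * ω) - x * (Real.sinh ((p - 1) / 2 * Real.sqrt ω * x) /
          Real.cosh ((p - 1) / 2 * Real.sqrt ω * x)) / (2 * Real.sqrt ω)) * soliton p ω x) ω := by
  have hsω : 0 < Real.sqrt ω := Real.sqrt_pos.mpr hω
  have hp1 : p - 1 ≠ 0 := by linarith
  set B : ℝ := ((p + 1) / 2) ^ (1 / (p - 1)) with hB
  have hB0 : 0 < B := by
    have : (0:ℝ) < (p+1)/2 := by linarith
    positivity
  have h0 : HasDerivAt (fun w : ℝ => w ^ (1 / (p - 1)))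
      (1 / (p - 1) * ω ^ (1 / (p - 1) - 1)) ω :=
    Real.hasDerivAt_rpow_const (Or.inl hω.ne')
  have hs : HasDerivAt Real.sqrt (1 / (2 * Real.sqrt ω)) ω := Real.hasDerivAt_sqrt hω.ne'
  have hu : HasDerivAt (fun w : ℝ => (p - 1) / 2 * Real.sqrt w * x)
      ((p - 1) / 2 * (1 / (2 * Real.sqrt ω)) * x) ω :=
    ((hs.const_mul ((p - 1) / 2)).mul_const x)
  have h2 : HasDerivAt (fun w : ℝ => Real.cosh ((p - 1) / 2 * Real.sqrt w * x))
      (Real.sinh ((p - 1) / 2 * Real.sqrt ω * x) * ((p - 1) / 2 * (1 / (2 * Real.sqrt ω)) * x)) ω :=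
    (Real.hasDerivAt_cosh _).comp ω hu
  have h3 := h2.inv (Real.cosh_pos _).ne'
  have h4 := h3.rpow_const (p := 2 / (p - 1))
    (Or.inl (inv_ne_zero (Real.cosh_pos _).ne'))
  have h5 := (h0.mul_const B).mul h4
  have key : (fun w => soliton p w x) = fun w : ℝ =>
      w ^ (1 / (p - 1)) * B * ((Real.cosh ((p - 1) / 2 * Real.sqrt w * x))⁻¹ ^ (2 / (p - 1))) := by
    funext w; unfold soliton; rw [hB]; norm_num
  rw [key]
  convert h5 using 1
  · rfl
  · rfl
  · rfl
  simp only [Pi.inv_apply]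
  set u : ℝ := (p - 1) / 2 * Real.sqrt ω * x with hu'
  have hch : (0:ℝ) < Real.cosh u := Real.cosh_pos _
  have hrw : ((Real.cosh u)⁻¹) ^ (2 / (p - 1) - 1) * (Real.cosh u)⁻¹
      = ((Real.cosh u)⁻¹) ^ (2 / (p - 1)) := by
    rw [← Real.rpow_add_one (by positivity) (2 / (p - 1) - 1)]
    ring_nf
  have hω1 : ω ^ (1 / (p - 1) - 1) = ω ^ (1 / (p - 1)) / ω := by
    rw [Real.rpow_sub hω, Real.rpow_one]
  rw [show soliton p ω x = ω ^ (1 / (p - 1)) * B * ((Real.cosh u)⁻¹ ^ (2 / (p - 1)))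
    from congrFun key ω, ← hrw, hω1]
  field_simp
  ring

lemma soliton_le {p ω : ℝ} (hp : 1 < p) (hω : 0 < ω) (x : ℝ) :
    soliton p ω x ≤ (ω ^ (1 / (p - 1)) * ((p + 1) / 2) ^ (1 / (p - 1)) * 2 ^ (2 / (p - 1))) *
      Real.exp (-(Real.sqrt ω * |x|)) := by
  have hsω : 0 < Real.sqrt ω := Real.sqrt_pos.mpr hω
  have hp1 : (0:ℝ) < p - 1 := by linarith
  set u : ℝ := (p - 1) / 2 * Real.sqrt ω * x with hu
  have hch : (0:ℝ) < Real.cosh u := Real.cosh_pos _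
  have h1 : 1 / Real.cosh u ≤ 2 * Real.exp (-|u|) := by
    have hle : Real.exp |u| / 2 ≤ Real.cosh u := by
      rw [Real.cosh_eq]
      gcongr
      rcases abs_choice u with h | h <;> rw [h] <;>
        nlinarith [Real.exp_pos u, Real.exp_pos (-u)]
    calc 1 / Real.cosh u ≤ 1 / (Real.exp |u| / 2) :=
          one_div_le_one_div_of_le (by positivity) hle
      _ = 2 * Real.exp (-|u|) := by rw [Real.exp_neg]; field_simp
  have h2 : (1 / Real.cosh u) ^ (2 / (p - 1)) ≤ (2 * Real.exp (-|u|)) ^ (2 / (p - 1)) :=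
    Real.rpow_le_rpow (by positivity) h1 (by positivity)
  have h3 : (2 * Real.exp (-|u|)) ^ (2 / (p - 1))
      = 2 ^ (2 / (p - 1)) * Real.exp (-(Real.sqrt ω * |x|)) := by
    rw [Real.mul_rpow (by norm_num) (Real.exp_pos _).le, ← Real.exp_mul]
    congr 2
    rw [hu, abs_mul, abs_mul, abs_of_pos (by positivity : (0:ℝ) < (p-1)/2),
      abs_of_pos hsω]
    field_simp
  have hpp : (0:ℝ) < (p+1)/2 := by linarith
  calc soliton p ω x
      = ω ^ (1 / (p - 1)) * ((p + 1) / 2) ^ (1 / (p - 1)) * ((1 / Real.cosh u) ^ (2 / (p - 1))) := by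
        unfold soliton; rw [hu]
    _ ≤ ω ^ (1 / (p - 1)) * ((p + 1) / 2) ^ (1 / (p - 1)) *
          (2 ^ (2 / (p - 1)) * Real.exp (-(Real.sqrt ω * |x|))) :=
        mul_le_mul_of_nonneg_left (h2.trans_eq h3) (by positivity)
    _ = _ := by ring

theorem soliton_int_pow_mul_deriv_omega (p ω q : ℝ) (hp : 1 < p) (hω : 0 < ω) (hq : 1 ≤ q) :
    ∫ x : ℝ, soliton p ω x ^ q * deriv (fun w => soliton p w x) ω =
      (2 * q - p + 3) / (2 * (p - 1) * (q + 1)) * ω⁻¹ * ∫ x : ℝ, soliton p ω x ^ (q + 1) := by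
  have hsω : 0 < Real.sqrt ω := Real.sqrt_pos.mpr hω
  have hp1 : (0:ℝ) < p - 1 := by linarith
  have hq1 : (0:ℝ) < q + 1 := by linarith
  set C : ℝ := ω ^ (1 / (p - 1)) * ((p + 1) / 2) ^ (1 / (p - 1)) * 2 ^ (2 / (p - 1)) with hC
  have hC0 : 0 < C := by
    have : (0:ℝ) < (p+1)/2 := by linarith
    positivity
  set T : ℝ → ℝ := fun x => Real.sinh ((p - 1) / 2 * Real.sqrt ω * x) /
      Real.cosh ((p - 1) / 2 * Real.sqrt ω * x) with hT
  have hTle : ∀ x, |T x| ≤ 1 := fun x => by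
    rw [hT, abs_div, div_le_one (abs_pos.mpr (Real.cosh_pos _).ne')]
    rw [abs_of_pos (Real.cosh_pos _)]
    exact abs_sinh_le_cosh' _
  have hR := fun x => soliton_pos hp hω x
  -- pointwise bound for powers
  have hbnd : ∀ r : ℝ, 1 ≤ r → ∀ x : ℝ,
      soliton p ω x ^ r ≤ C ^ r * Real.exp (-(Real.sqrt ω * |x|)) := by
    intro r hr x
    calc soliton p ω x ^ r ≤ (C * Real.exp (-(Real.sqrt ω * |x|))) ^ r :=
          Real.rpow_le_rpow (hR x).le (soliton_le hp hω x) (by linarith)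
      _ = C ^ r * Real.exp (-(Real.sqrt ω * |x|)) ^ r :=
          Real.mul_rpow hC0.le (Real.exp_pos _).le
      _ ≤ C ^ r * Real.exp (-(Real.sqrt ω * |x|)) := by
          refine mul_le_mul_of_nonneg_left ?_ (Real.rpow_nonneg hC0.le r)
          rw [← Real.exp_mul]
          refine Real.exp_le_exp.mpr ?_
          have h0 : Real.sqrt ω * |x| ≥ 0 := by positivity
          nlinarith
  -- continuity
  have hlin : Continuous fun x : ℝ => (p - 1) / 2 * Real.sqrt ω * x :=
    continuous_const.mul continuous_id
  have hcontR : Continuous fun x => soliton p ω x := by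
    unfold soliton
    exact (continuous_const.mul
      ((continuous_const.div (Real.continuous_cosh.comp hlin)
        (fun x => (Real.cosh_pos _).ne')).rpow_const
        (fun x => Or.inr (by positivity))))
  have hcontT : Continuous T :=
    (Real.continuous_sinh.comp hlin).div (Real.continuous_cosh.comp hlin)
      (fun x => (Real.cosh_pos _).ne')
  -- integrability of the two basic functions
  have hmaj0 : Integrable (fun x : ℝ => Real.exp (-Real.sqrt ω * |x|)) := by
    have h := integrable_aux hsω 0
    simpa using h
  have hmaj1 : Integrable (fun x : ℝ => |x| ^ (1:ℕ) * Real.exp (-Real.sqrt ω * |x|)) :=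
    integrable_aux hsω 1
  have hf1 : Integrable (fun x : ℝ => soliton p ω x ^ (q + 1)) := by
    refine Integrable.mono' (hmaj0.const_mul (C ^ (q+1)))
      ((hcontR.rpow_const (fun x => Or.inr (by linarith))).aestronglyMeasurable) ?_
    filter_upwards with x
    rw [Real.norm_eq_abs, abs_of_pos (Real.rpow_pos_of_pos (hR x) _)]
    have := hbnd (q+1) (by linarith) x
    simpa [neg_mul] using this
  have hf2 : Integrable (fun x : ℝ => x * T x * soliton p ω x ^ (q + 1)) := by
    refine Integrable.mono' (hmaj1.const_mul (C ^ (q+1)))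
      (((continuous_id.mul hcontT).mul
        (hcontR.rpow_const (fun x => Or.inr (by linarith)))).aestronglyMeasurable) ?_
    filter_upwards with x
    rw [Real.norm_eq_abs, abs_mul, abs_mul]
    have h1 : |soliton p ω x ^ (q+1)| ≤ C ^ (q+1) * Real.exp (-(Real.sqrt ω * |x|)) := by
      rw [abs_of_pos (Real.rpow_pos_of_pos (hR x) _)]
      exact hbnd (q+1) (by linarith) x
    calc |x| * |T x| * |soliton p ω x ^ (q+1)|
        ≤ |x| * 1 * (C ^ (q+1) * Real.exp (-(Real.sqrt ω * |x|))) := by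
          gcongr <;> first
            | exact hTle x
            | exact h1
      _ = C ^ (q+1) * (|x| ^ (1:ℕ) * Real.exp (-Real.sqrt ω * |x|)) := by
          rw [pow_one]; ring_nf
  -- integration by parts: ∫ d/dx (x * R^{q+1}) = 0
  have hpow : ∀ x : ℝ, soliton p ω x ^ q * soliton p ω x = soliton p ω x ^ (q + 1) :=
    fun x => (Real.rpow_add_one (hR x).ne' q).symm
  have hg : Integrable (fun x : ℝ => x * soliton p ω x ^ (q + 1)) := by
    refine Integrable.mono' (hmaj1.const_mul (C ^ (q+1)))
      ((continuous_id.mul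
        (hcontR.rpow_const (fun x => Or.inr (by linarith)))).aestronglyMeasurable) ?_
    filter_upwards with x
    rw [Real.norm_eq_abs, abs_mul, abs_of_pos (Real.rpow_pos_of_pos (hR x) _)]
    calc |x| * soliton p ω x ^ (q+1)
        ≤ |x| * (C ^ (q+1) * Real.exp (-(Real.sqrt ω * |x|))) := by
          gcongr
          exact hbnd (q+1) (by linarith) x
      _ = C ^ (q+1) * (|x| ^ (1:ℕ) * Real.exp (-Real.sqrt ω * |x|)) := by
          rw [pow_one]; ring_nf
  have hg' : ∀ x : ℝ, HasDerivAt (fun x : ℝ => x * soliton p ω x ^ (q + 1))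
      (soliton p ω x ^ (q + 1) -
        ((q + 1) * Real.sqrt ω) * (x * T x * soliton p ω x ^ (q + 1))) x := by
    intro x
    have hRd := (soliton_hasDerivAt_x hp hω x).rpow_const (p := q + 1) (Or.inl (hR x).ne')
    have h := (hasDerivAt_id x).mul hRd
    convert h using 1
    · rfl
    · rfl
    · rfl
    rw [add_sub_cancel_right, ← hpow x]
    simp only [hT, id_eq]
    ring
  have hIBP : (∫ x : ℝ, (soliton p ω x ^ (q + 1) -
      ((q + 1) * Real.sqrt ω) * (x * T x * soliton p ω x ^ (q + 1)))) = 0 :=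
    integral_eq_zero_of_hasDerivAt_of_integrable hg'
      (hf1.sub (hf2.const_mul _)) hg
  rw [integral_sub hf1 (hf2.const_mul _), integral_const_mul, sub_eq_zero] at hIBP
  -- rewrite the integrand of the LHS
  have hDω : (fun x : ℝ => soliton p ω x ^ q * deriv (fun w => soliton p w x) ω) =
      fun x : ℝ => 1 / ((p - 1) * ω) * soliton p ω x ^ (q + 1) -
        1 / (2 * Real.sqrt ω) * (x * T x * soliton p ω x ^ (q + 1)) := by
    funext x
    rw [(soliton_hasDerivAt_omega hp hω x).deriv, ← hpow x]
    simp only [hT]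
    field_simp
  rw [hDω, integral_sub (hf1.const_mul _) (hf2.const_mul _),
    integral_const_mul, integral_const_mul, hIBP]
  set s : ℝ := Real.sqrt ω with hs
  rw [show ω = s * s from (Real.mul_self_sqrt hω.le).symm]
  have hs0 : s ≠ 0 := hsω.ne'
  field_simp
  ring
end

section
/- For every p > 1, ω > 0, and r > 1, the integral identity ∫_ℝ R_ω(x)^{p+r} dx = ((p+1)(r+1))/(2r + p + 1) · ω · ∫_ℝ R_ω(x)^{r+1} dx holds. -/
open Real MeasureTheory

section Aux
open Filter Set


lemma sech_integrableOn_Ioi {c : ℝ} (hc : 0 < c) :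
    IntegrableOn (fun x : ℝ => Real.cosh x ^ (-c)) (Ioi 0) := by
  have hmeas : AEStronglyMeasurable (fun x : ℝ => Real.cosh x ^ (-c))
      (volume.restrict (Ioi 0)) :=
    (Real.continuous_cosh.rpow_const (fun x => Or.inl (Real.cosh_pos x).ne')).aestronglyMeasurable
  have hint : IntegrableOn (fun x : ℝ => 2 ^ c * Real.exp (-c * x)) (Ioi 0) :=
    (exp_neg_integrableOn_Ioi 0 hc).const_mul _
  refine Integrable.mono hint hmeas ?_
  filter_upwards [ae_restrict_mem measurableSet_Ioi] with x hx
  have h1 : Real.exp x / 2 ≤ Real.cosh x := by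
    rw [Real.cosh_eq]
    have := (Real.exp_pos (-x)).le
    linarith
  have h2 : Real.cosh x ^ (-c) ≤ (Real.exp x / 2) ^ (-c) :=
    Real.rpow_le_rpow_of_nonpos (by positivity) h1 (by linarith)
  have h3 : (Real.exp x / 2) ^ (-c) = 2 ^ c * Real.exp (-c * x) := by
    rw [Real.div_rpow (Real.exp_pos x).le (by norm_num), ← Real.exp_mul,
      Real.rpow_neg (by norm_num)]
    rw [division_def, inv_inv, mul_comm (-c) x]; ring
  have h4 : (0:ℝ) < Real.cosh x ^ (-c) := Real.rpow_pos_of_pos (Real.cosh_pos x) _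
  rw [Real.norm_eq_abs, abs_of_pos h4, Real.norm_eq_abs]
  rw [h3] at h2
  exact h2.trans (le_abs_self _)

lemma sech_integrable {c : ℝ} (hc : 0 < c) :
    Integrable (fun x : ℝ => Real.cosh x ^ (-c)) := by
  have hIoi := sech_integrableOn_Ioi hc
  have hIic : IntegrableOn (fun x : ℝ => Real.cosh x ^ (-c)) (Iic 0) := by
    rw [← Measure.map_neg_eq_self (volume : Measure ℝ)]
    let m : MeasurableEmbedding fun x : ℝ => -x := (Homeomorph.neg ℝ).measurableEmbedding
    rw [m.integrableOn_map_iff]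
    simp_rw [Function.comp_def, Real.cosh_neg, neg_preimage, neg_Iic, neg_zero]
    exact (integrableOn_Ici_iff_integrableOn_Ioi).mpr hIoi
  rw [← integrableOn_univ, ← Iic_union_Ioi (a := (0:ℝ))]
  exact hIic.union hIoi



lemma aux_hasDerivAt (c x : ℝ) :
    HasDerivAt (fun x => Real.sinh x * Real.cosh x ^ (-(c+1)))
      ((c+1) * Real.cosh x ^ (-(c+2)) - c * Real.cosh x ^ (-c)) x := by
  have hc := Real.cosh_pos x
  have h1 := (Real.hasDerivAt_cosh x).rpow_const (p := -(c+1)) (Or.inl hc.ne')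
  have h2 := (Real.hasDerivAt_sinh x).mul h1
  convert h2 using 1
  · rfl
  · rfl
  · rfl
  have e0 : Real.cosh x ^ (-(c+1)-1) = Real.cosh x ^ (-(c+2)) := by ring_nf
  have e1 : Real.cosh x ^ (-c) = Real.cosh x * Real.cosh x ^ (-(c+1)) := by
    rw [show (-c) = 1 + -(c+1) by ring, Real.rpow_add hc, Real.rpow_one]
  have e2 : Real.cosh x ^ (2:ℕ) * Real.cosh x ^ (-(c+2)) = Real.cosh x ^ (-c) := by
    rw [← Real.rpow_natCast _ 2, ← Real.rpow_add hc]; norm_num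
  have e3 : Real.sinh x ^ (2:ℕ) = Real.cosh x ^ (2:ℕ) - 1 := by
    have := Real.cosh_sq x; nlinarith [this]
  rw [e0]
  linear_combination e1 + (c+1) * e2 + (c+1) * Real.cosh x ^ (-(c+2)) * e3

lemma aux_tendsto (c : ℝ) (hc : 0 < c) :
    Tendsto (fun x => Real.sinh x * Real.cosh x ^ (-(c+1))) atTop (nhds 0) := by
  have hcosh : Tendsto Real.cosh atTop atTop := by
    apply tendsto_atTop_mono (fun x => ?_) (Real.tendsto_exp_atTop.atTop_div_const (by norm_num : (0:ℝ) < 2))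
    rw [Real.cosh_eq]; have := (Real.exp_pos (-x)).le; linarith
  have h0 : Tendsto (fun x => Real.cosh x ^ (-c)) atTop (nhds 0) :=
    (tendsto_rpow_neg_atTop hc).comp hcosh
  apply squeeze_zero_norm (fun x => ?_) h0
  have hcx := Real.cosh_pos x
  have hK : (0:ℝ) < Real.cosh x ^ (-(c+1)) := Real.rpow_pos_of_pos hcx _
  have hs : |Real.sinh x| ≤ Real.cosh x := by
    rw [Real.sinh_eq, Real.cosh_eq]
    have h1 := (Real.exp_pos x).le; have h2 := (Real.exp_pos (-x)).le
    rw [abs_le]; constructor <;> [linarith; linarith]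
  calc ‖Real.sinh x * Real.cosh x ^ (-(c+1))‖
      = |Real.sinh x| * Real.cosh x ^ (-(c+1)) := by
        rw [norm_mul, Real.norm_eq_abs, Real.norm_eq_abs, abs_of_pos hK]
    _ ≤ Real.cosh x * Real.cosh x ^ (-(c+1)) := by
        exact mul_le_mul_of_nonneg_right hs hK.le
    _ = Real.cosh x ^ (-c) := by
        rw [show (-c) = 1 + -(c+1) by ring, Real.rpow_add hcx, Real.rpow_one]


lemma sech_rec {c : ℝ} (hc : 0 < c) :
    (c+1) * ∫ x : ℝ, Real.cosh x ^ (-(c+2)) = c * ∫ x : ℝ, Real.cosh x ^ (-c) := by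
  have h2 : IntegrableOn (fun x : ℝ => Real.cosh x ^ (-(c+2))) (Ioi 0) :=
    sech_integrableOn_Ioi (by linarith)
  have h0 : IntegrableOn (fun x : ℝ => Real.cosh x ^ (-c)) (Ioi 0) :=
    sech_integrableOn_Ioi hc
  have key : ∫ x in Ioi (0:ℝ),
      ((c+1) * Real.cosh x ^ (-(c+2)) - c * Real.cosh x ^ (-c)) =
      0 - Real.sinh 0 * Real.cosh 0 ^ (-(c+1)) := by
    have := integral_Ioi_of_hasDerivAt_of_tendsto' (f' := fun x =>
        (c+1) * Real.cosh x ^ (-(c+2)) - c * Real.cosh x ^ (-c))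
      (fun x _ => aux_hasDerivAt c x)
      ((h2.const_mul _).sub (h0.const_mul _)) (aux_tendsto c hc)
    simpa using this
  rw [Real.sinh_zero, zero_mul, sub_zero] at key
  rw [integral_sub (h2.const_mul _) (h0.const_mul _), integral_const_mul,
    integral_const_mul, sub_eq_zero] at key
  have full : ∀ e : ℝ, ∫ x : ℝ, Real.cosh x ^ (-e)
      = 2 * ∫ x in Ioi (0:ℝ), Real.cosh x ^ (-e) := by
    intro e
    rw [← integral_comp_abs (f := fun t => Real.cosh t ^ (-e))]
    congr 1; funext x; rw [Real.cosh_abs]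
  rw [full (c+2), full c]
  nlinarith [key]

end Aux

section Main
open Filter Set

theorem soliton_int_pow_identity (p ω r : ℝ) (hp : 1 < p) (hω : 0 < ω) (hr : 1 < r) :
    ∫ x : ℝ, soliton p ω x ^ (p + r) =
      (p + 1) * (r + 1) / (2 * r + p + 1) * ω * ∫ x : ℝ, soliton p ω x ^ (r + 1) := by
  have hp1 : (0:ℝ) < p - 1 := by linarith
  set k : ℝ := (p - 1) / 2 * Real.sqrt ω with hk_def
  have hk : 0 < k := by positivity
  set D : ℝ := ω * ((p + 1) / 2) with hD_def
  have hD : 0 < D := by positivity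
  have solpow : ∀ e x : ℝ, soliton p ω x ^ e
      = D ^ (e / (p - 1)) * Real.cosh (k * x) ^ (-(2 / (p - 1) * e)) := by
    intro e x
    have hch := Real.cosh_pos (k * x)
    have hsech : (0:ℝ) ≤ 1 / Real.cosh (k * x) := by positivity
    rw [soliton, ← Real.mul_rpow hω.le (by positivity : (0:ℝ) ≤ (p+1)/2)]
    rw [Real.mul_rpow (Real.rpow_nonneg hD.le _) (Real.rpow_nonneg hsech _),
      ← Real.rpow_mul hD.le, ← Real.rpow_mul hsech, one_div (Real.cosh (k*x)),
      Real.inv_rpow hch.le, ← Real.rpow_neg hch.le,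
      show 1 / (p-1) * e = e / (p-1) by ring]
  have Jint : ∀ e : ℝ, ∫ x : ℝ, soliton p ω x ^ e
      = D ^ (e / (p - 1)) * (|k⁻¹| * ∫ y : ℝ, Real.cosh y ^ (-(2 / (p - 1) * e))) := by
    intro e
    simp_rw [solpow e]
    rw [integral_const_mul, MeasureTheory.Measure.integral_comp_mul_left
      (fun y => Real.cosh y ^ (-(2 / (p - 1) * e))) k, smul_eq_mul]
  set c : ℝ := 2 / (p - 1) * (r + 1) with hc_def
  have hc : 0 < c := by positivity
  have he1 : -(2 / (p - 1) * (p + r)) = -(c + 2) := by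
    rw [hc_def]; field_simp; ring
  have hrec := sech_rec hc
  rw [Jint (p + r), Jint (r + 1), he1]
  set J2 : ℝ := ∫ x : ℝ, Real.cosh x ^ (-(c+2)) with hJ2
  set J0 : ℝ := ∫ x : ℝ, Real.cosh x ^ (-c) with hJ0
  have hDsplit : D ^ ((p + r) / (p - 1)) = D ^ ((r + 1) / (p - 1)) * D := by
    rw [show (p + r) / (p - 1) = (r + 1) / (p - 1) + 1 by field_simp; ring,
      Real.rpow_add hD, Real.rpow_one]
  rw [hDsplit]
  have hc1 : c + 1 = (2 * r + p + 1) / (p - 1) := by rw [hc_def]; field_simp; ring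
  have hdenom : (0:ℝ) < 2 * r + p + 1 := by linarith
  have hJrel : J2 = c / (c + 1) * J0 := by
    have hc1' : c + 1 ≠ 0 := by positivity
    field_simp
    linarith [hrec]
  rw [hJrel, hD_def, hc_def]
  have hp1' : p - 1 ≠ 0 := ne_of_gt hp1
  field_simp
  ring

end Main
end

section
/- For p > 1 and ω > 0, the function u(x,y) = R_ω^{(p+1)/2}(x) cos y on ℝ × (ℝ/2πℤ) satisfies -∂_x²u - ∂_y²u + ωu - p R_ω^{p-1} u = (1 - ω/ω_p) u pointwise, where ω_p = 4/((p-1)(p+3)). In particular, when ω = ω_p the function R_{ω_p}^{(p+1)/2}(x) cos y lies in the kernel of the linearized operator -∂_x² - ∂_y² + ω_p - p R_{ω_p}^{p-1}. -/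
open Real MeasureTheory

namespace SolitonAux

noncomputable def ac (p ω : ℝ) : ℝ := (p - 1) / 2 * Real.sqrt ω
noncomputable def bc (p : ℝ) : ℝ := (p + 1) / (p - 1)
noncomputable def Kc (p ω : ℝ) : ℝ :=
  (ω ^ (1 / (p - 1)) * ((p + 1) / 2) ^ (1 / (p - 1))) ^ ((p + 1) / 2)

lemma hA (p ω : ℝ) (hp : 1 < p) (hω : 0 < ω) (t : ℝ) :
    soliton p ω t ^ ((p + 1) / 2) = Kc p ω * Real.cosh (ac p ω * t) ^ (-(bc p)) := by
  have hp1 : p - 1 ≠ 0 := sub_ne_zero.mpr hp.ne'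
  have hc := Real.cosh_pos ((p - 1) / 2 * Real.sqrt ω * t)
  unfold soliton Kc ac bc
  rw [Real.mul_rpow (by positivity) (by positivity),
    ← Real.rpow_mul (by positivity), one_div (Real.cosh _),
    Real.inv_rpow hc.le, ← Real.rpow_neg hc.le,
    show 2 / (p - 1) * ((p + 1) / 2) = (p + 1) / (p - 1) from by field_simp]

lemma hB (p ω : ℝ) (hp : 1 < p) (hω : 0 < ω) (x : ℝ) :
    soliton p ω x ^ (p - 1)
      = ω * (p + 1) / 2 * Real.cosh (ac p ω * x) ^ (-(2:ℝ)) := by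
  have hp1 : p - 1 ≠ 0 := sub_ne_zero.mpr hp.ne'
  have hc := Real.cosh_pos ((p - 1) / 2 * Real.sqrt ω * x)
  unfold soliton ac
  have h1 : ∀ c : ℝ, 0 ≤ c → (c ^ (1 / (p - 1))) ^ (p - 1) = c := fun c hcn => by
    rw [← Real.rpow_mul hcn, show 1 / (p - 1) * (p - 1) = 1 from by field_simp,
      Real.rpow_one]
  have h2 : ((1 / Real.cosh ((p - 1) / 2 * Real.sqrt ω * x)) ^ (2 / (p - 1))) ^ (p - 1)
      = Real.cosh ((p - 1) / 2 * Real.sqrt ω * x) ^ (-(2:ℝ)) := by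
    rw [← Real.rpow_mul (by positivity), show 2 / (p - 1) * (p - 1) = 2 from by field_simp,
      one_div (Real.cosh _), Real.inv_rpow hc.le, ← Real.rpow_neg hc.le]
  rw [Real.mul_rpow (by positivity) (by positivity),
    Real.mul_rpow (by positivity) (by positivity), h1 ω hω.le, h1 _ (by positivity), h2]
  ring

lemma d2y (A y : ℝ) : deriv (deriv (fun s => A * Real.cos s)) y = -(A * Real.cos y) := by
  have h1 : deriv (fun s => A * Real.cos s) = fun s => A * -Real.sin s :=
    funext fun s => by rw [deriv_const_mul_field, (Real.hasDerivAt_cos s).deriv]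
  rw [h1, deriv_const_mul_field]
  have h2 : deriv (fun s => -Real.sin s) y = -Real.cos y := ((Real.hasDerivAt_sin y).neg).deriv
  rw [h2]; ring

lemma d2x (p ω : ℝ) (hp : 1 < p) (hω : 0 < ω) (y x : ℝ) :
    deriv (deriv (fun t => soliton p ω t ^ ((p + 1) / 2) * Real.cos y)) x
      = Kc p ω * Real.cos y * (ac p ω ^ 2 *
          (bc p ^ 2 * Real.cosh (ac p ω * x) ^ (-(bc p))
            - bc p * (bc p + 1) * Real.cosh (ac p ω * x) ^ (-(bc p) - 2))) := by
  set a := ac p ω with ha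
  set β := bc p with hβ
  set K := Kc p ω with hK
  have hfun : (fun t => soliton p ω t ^ ((p + 1) / 2) * Real.cos y)
      = fun t => (K * Real.cos y) * Real.cosh (a * t) ^ (-β) :=
    funext fun t => by rw [hA p ω hp hω t]; ring
  rw [hfun]
  have hd1 : ∀ t : ℝ, HasDerivAt (fun t => Real.cosh (a * t) ^ (-β))
      (Real.sinh (a * t) * (a * 1) * (-β) * Real.cosh (a * t) ^ (-β - 1)) t := fun t =>
    ((Real.hasDerivAt_cosh (a * t)).comp t ((hasDerivAt_id t).const_mul a)).rpow_const
      (Or.inl (Real.cosh_pos (a * t)).ne')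
  have h1 : deriv (fun t => (K * Real.cos y) * Real.cosh (a * t) ^ (-β))
      = fun t => (K * Real.cos y * (a * 1) * (-β)) *
          (Real.sinh (a * t) * Real.cosh (a * t) ^ (-β - 1)) := by
    funext t
    rw [deriv_const_mul_field, (hd1 t).deriv]; ring
  rw [h1, deriv_const_mul_field]
  have hd2 : HasDerivAt (fun t => Real.sinh (a * t) * Real.cosh (a * t) ^ (-β - 1))
      (Real.cosh (a * x) * (a * 1) * Real.cosh (a * x) ^ (-β - 1)
        + Real.sinh (a * x) *
            (Real.sinh (a * x) * (a * 1) * (-β - 1) * Real.cosh (a * x) ^ (-β - 1 - 1))) x :=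
    ((Real.hasDerivAt_sinh (a * x)).comp x ((hasDerivAt_id x).const_mul a)).mul
      (((Real.hasDerivAt_cosh (a * x)).comp x ((hasDerivAt_id x).const_mul a)).rpow_const
        (Or.inl (Real.cosh_pos (a * x)).ne'))
  rw [hd2.deriv, show -β - 1 - 1 = -β - 2 from by ring]
  have hc := Real.cosh_pos (a * x)
  have e1 : Real.cosh (a * x) * Real.cosh (a * x) ^ (-β - 1) = Real.cosh (a * x) ^ (-β) := by
    nth_rewrite 1 [← Real.rpow_one (Real.cosh (a * x))]
    rw [← Real.rpow_add hc]
    congr 1; ring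
  have e2 : Real.cosh (a * x) ^ 2 * Real.cosh (a * x) ^ (-β - 2) = Real.cosh (a * x) ^ (-β) := by
    rw [← Real.rpow_natCast (Real.cosh (a * x)) 2, ← Real.rpow_add hc]
    congr 1; push_cast; ring
  have es : Real.sinh (a * x) ^ 2 = Real.cosh (a * x) ^ 2 - 1 := Real.sinh_sq (a * x)
  linear_combination
    (K * Real.cos y * a ^ 2 * β * (β + 1) * Real.cosh (a * x) ^ (-β - 2)) * es
    - (K * Real.cos y * a ^ 2 * β) * e1
    + (K * Real.cos y * a ^ 2 * β * (β + 1)) * e2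

lemma key (p ω : ℝ) (hp : 1 < p) (hω : 0 < ω) (x y : ℝ) :
    -(deriv (deriv (fun t => soliton p ω t ^ ((p + 1) / 2) * Real.cos y)) x)
        - deriv (deriv (fun s => soliton p ω x ^ ((p + 1) / 2) * Real.cos s)) y
        + ω * (soliton p ω x ^ ((p + 1) / 2) * Real.cos y)
        - p * soliton p ω x ^ (p - 1) * (soliton p ω x ^ ((p + 1) / 2) * Real.cos y)
      = (1 - ω / (4 / ((p - 1) * (p + 3)))) * (soliton p ω x ^ ((p + 1) / 2) * Real.cos y) := by
  have hp1 : p - 1 ≠ 0 := sub_ne_zero.mpr hp.ne'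
  have hc := Real.cosh_pos (ac p ω * x)
  rw [d2x p ω hp hω y x, d2y, hA p ω hp hω x, hB p ω hp hω x, div_div_eq_mul_div]
  have ha2 : ac p ω ^ 2 = (p - 1) ^ 2 * ω / 4 := by
    unfold ac; rw [mul_pow, Real.sq_sqrt hω.le]; ring
  have hb : bc p * (p - 1) = p + 1 := by unfold bc; field_simp
  have e3 : Real.cosh (ac p ω * x) ^ (-(2:ℝ)) * Real.cosh (ac p ω * x) ^ (-(bc p))
      = Real.cosh (ac p ω * x) ^ (-(bc p) - 2) := by
    rw [← Real.rpow_add hc]; congr 1; ring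
  set a := ac p ω
  set β := bc p
  set K := Kc p ω
  set u := Real.cosh (a * x) ^ (-β)
  set w := Real.cosh (a * x) ^ (-β - 2)
  set c2 := Real.cosh (a * x) ^ (-(2:ℝ))
  linear_combination
    (-(p * (ω * (p + 1) / 2) * K * Real.cos y)) * e3
    + (K * Real.cos y * (-(β ^ 2) * u + β * (β + 1) * w)) * ha2
    + (K * Real.cos y * ω / 4 * (-(β * (p - 1) + (p + 1)) * u
        + ((p - 1) * (β + 1) + (p + 1)) * w)) * hb

end SolitonAux

theorem soliton_cos_eigenfunction (p ω : ℝ) (hp : 1 < p) (hω : 0 < ω) :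
    (∀ x y : ℝ,
      -(deriv (deriv (fun t => soliton p ω t ^ ((p + 1) / 2) * Real.cos y)) x)
        - deriv (deriv (fun s => soliton p ω x ^ ((p + 1) / 2) * Real.cos s)) y
        + ω * (soliton p ω x ^ ((p + 1) / 2) * Real.cos y)
        - p * soliton p ω x ^ (p - 1) * (soliton p ω x ^ ((p + 1) / 2) * Real.cos y)
      = (1 - ω / (4 / ((p - 1) * (p + 3)))) * (soliton p ω x ^ ((p + 1) / 2) * Real.cos y)) ∧
    (ω = 4 / ((p - 1) * (p + 3)) → ∀ x y : ℝ,
      -(deriv (deriv (fun t => soliton p ω t ^ ((p + 1) / 2) * Real.cos y)) x)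
        - deriv (deriv (fun s => soliton p ω x ^ ((p + 1) / 2) * Real.cos s)) y
        + ω * (soliton p ω x ^ ((p + 1) / 2) * Real.cos y)
        - p * soliton p ω x ^ (p - 1) * (soliton p ω x ^ ((p + 1) / 2) * Real.cos y)
      = 0) := by
  constructor
  · exact fun x y => SolitonAux.key p ω hp hω x y
  · intro h x y
    rw [SolitonAux.key p ω hp hω x y, h]
    have h1 : (0:ℝ) < p - 1 := sub_pos.mpr hp
    have h2 : (0:ℝ) < p + 3 := by linarith
    have h3 : (4 / ((p - 1) * (p + 3)) : ℝ) ≠ 0 :=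
      (div_pos four_pos (mul_pos h1 h2)).ne'
    rw [div_self h3, sub_self, zero_mul]
end
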